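/- Let A be an associative unital ℝ-algebra, n a real number, and d, δ, x, y, Δ, Q, N elements of A satisfying x·x = 0, y·y = 0, δ·y + y·δ = 0, x·y + y·x = Q, Q·x = x·Q, Q·δ − δ·Q = 2y, and N·x − x·N = x. Define ιD := −δ·(n·1 + 2N − 2·1) + y·Δ. Let M be a module over A, let w be a real number, and let U ∈ M satisfy N·U = w•U. If there exists W ∈ M with y·U = y·(x·W), then y·(ιD·(x·U)) lies in the subset Q·M = {Q·m : m ∈ M}; in fact y·(ιD·(x·U)) = (n + 2w) • Q·(δ·U − δ·(x·W)). -/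
import Mathlib


/-- The operator `ι(𝔻) = −δ̃(n + 2∇_𝕏 − 2) + ι(𝕏)Δ̃` of Branson–Gover, modelled in
an abstract associative `ℝ`-algebra. -/
def iotaD {A : Type*} [Ring A] [Algebra ℝ A] (n : ℝ) (δ y Δ N : A) : A :=
  -(δ * (n • (1 : A) + (2 : ℝ) • N - (2 : ℝ) • (1 : A))) + y * Δ

/-- Algebraic content of Proposition 3.10(i) of Branson–Gover: if `U` is an
ambient lift (so `ι(𝕏)U = ι(𝕏)ε(𝕏)W`), then `ι(𝕏) ι(𝔻) ε(𝕏) U` lies in `Q·M`;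
in fact it equals `(n + 2w) Q (δ̃U − δ̃ε(𝕏)W)`. -/
theorem stmt_16
    {A : Type*} [Ring A] [Algebra ℝ A]
    (n : ℝ) (d δ x y Δ Q N : A)
    (h₁ : x * x = 0) (h₂ : y * y = 0)
    (h₃ : δ * y + y * δ = 0)
    (h₄ : x * y + y * x = Q)
    (h₅ : Q * x = x * Q)
    (h₆ : Q * δ - δ * Q = (2 : ℝ) • y)
    (h₇ : N * x - x * N = x)
    (M : Type*) [AddCommGroup M] [Module ℝ M] [Module A M] [IsScalarTower ℝ A M]
    (w : ℝ) (U : M) (hU : N • U = w • U)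
    (W : M) (hW : y • U = y • (x • W)) :
    (∃ m : M, y • (iotaD n δ y Δ N • (x • U)) = Q • m) ∧
    y • (iotaD n δ y Δ N • (x • U)) =
      (n + 2 * w) • (Q • (δ • U - δ • (x • W))) := by
  have hyx : y * x = Q - x * y := eq_sub_of_add_eq' h₄
  -- N acts on x•U as (w+1)
  have hNx : N • (x • U) = (w + 1) • (x • U) := by
    have hNx' : N * x = x + x * N := sub_eq_iff_eq_add.mp h₇
    rw [smul_smul, hNx', add_smul, mul_smul, hU, smul_comm, add_smul, one_smul, add_comm]
  -- the scalar part acts as (n + 2w)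
  have hS : (n • (1 : A) + (2 : ℝ) • N - (2 : ℝ) • (1 : A)) • (x • U)
      = (n + 2 * w) • (x • U) := by
    rw [sub_smul, add_smul, smul_assoc n, smul_assoc (2 : ℝ) N, smul_assoc (2 : ℝ) (1 : A),
      one_smul, hNx, smul_smul, ← add_smul, ← sub_smul]
    congr 1
    ring
  -- x • (y • U) = Q • (x • W)
  have hxyU : x • (y • U) = Q • (x • W) := by
    rw [hW, smul_smul, smul_smul, mul_assoc, hyx, mul_sub, ← h₅, ← mul_assoc, h₁, zero_mul,
      sub_zero, mul_smul]
  -- main simplification of  -(y • (δ • (x • U)))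
  have hKey : -(y • (δ • (x • U))) = Q • (δ • U - δ • (x • W)) := by
    have hyd : y * δ = -(δ * y) := eq_neg_of_add_eq_zero_right h₃
    have h1 : y • (δ • (x • U)) = -(δ • (y • (x • U))) := by
      rw [smul_smul, hyd, neg_smul, mul_smul]
    have h2 : y • (x • U) = Q • U - x • (y • U) := by
      rw [smul_smul, hyx, sub_smul, mul_smul]
    have hdQ : δ * Q = Q * δ - (2 : ℝ) • y :=
      eq_sub_of_add_eq (sub_eq_iff_eq_add'.mp h₆).symm
    have h3 : δ • (Q • U) - δ • (Q • (x • W)) = Q • (δ • U - δ • (x • W)) := by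
      rw [smul_smul, smul_smul, hdQ, sub_smul, sub_smul, mul_smul, mul_smul,
        smul_assoc, smul_assoc, hW, smul_sub]
      abel
    rw [h1, neg_neg, h2, smul_sub, hxyU, h3]
  -- the Δ part dies
  have hyy : y • (y • (Δ • (x • U))) = (0 : M) := by
    rw [smul_smul, h₂, zero_smul]
  have hMain : y • (iotaD n δ y Δ N • (x • U))
      = (n + 2 * w) • (Q • (δ • U - δ • (x • W))) := by
    rw [iotaD, add_smul, neg_smul, mul_smul, mul_smul, smul_add, smul_neg, hyy, add_zero,
      hS, smul_comm δ, smul_comm y, ← smul_neg, hKey]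
  exact ⟨⟨(n + 2 * w) • (δ • U - δ • (x • W)), by rw [hMain, smul_comm]⟩, hMain⟩
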